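/- arXiv:1607.00415 — 2 statements merged into one kernel-verified Lean document; each statement's English description precedes it below -/
import Mathlib

section
/- Let A = {A_1, …, A_m} be a finite irreducible family of d×d real matrices (no common nontrivial invariant subspace) with joint spectral radius 1. Then there exists a norm ‖·‖ on ℝ^d with max_{i} ‖A_i x‖ = ‖x‖ for all x ∈ ℝ^d. -/
open Filter

/-- The operator norm of a real `d × d` matrix induced by the sup-norm on `ℝ^d`. -/
noncomputable def mnorm {d : ℕ} (P : Matrix (Fin d) (Fin d) ℝ) : ℝ :=
  ‖LinearMap.toContinuousLinearMap (Matrix.toLin' P)‖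

/-- The set of all products of `k` matrices taken from the family `𝒜`. -/
def prodsOf {d : ℕ} (𝒜 : Set (Matrix (Fin d) (Fin d) ℝ)) (k : ℕ) :
    Set (Matrix (Fin d) (Fin d) ℝ) :=
  {P | ∃ l : List (Matrix (Fin d) (Fin d) ℝ), (∀ a ∈ l, a ∈ 𝒜) ∧ l.length = k ∧ l.prod = P}

variable {d : ℕ}

lemma mnorm_nonneg (P : Matrix (Fin d) (Fin d) ℝ) : 0 ≤ mnorm P := norm_nonneg _

lemma mulVec_le_mnorm (P : Matrix (Fin d) (Fin d) ℝ) (x : Fin d → ℝ) :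
    ‖P.mulVec x‖ ≤ mnorm P * ‖x‖ := by
  have := (LinearMap.toContinuousLinearMap (Matrix.toLin' P)).le_opNorm x
  simpa [Matrix.toLin'_apply, mnorm] using this

lemma mnorm_le_bound {P : Matrix (Fin d) (Fin d) ℝ} {c : ℝ} (hc : 0 ≤ c)
    (h : ∀ x, ‖P.mulVec x‖ ≤ c * ‖x‖) : mnorm P ≤ c := by
  refine ContinuousLinearMap.opNorm_le_bound _ hc fun x => ?_
  simpa [Matrix.toLin'_apply] using h x

lemma mnorm_mul_le (P Q : Matrix (Fin d) (Fin d) ℝ) :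
    mnorm (P * Q) ≤ mnorm P * mnorm Q := by
  refine mnorm_le_bound (mul_nonneg (mnorm_nonneg P) (mnorm_nonneg Q)) fun x => ?_
  rw [← Matrix.mulVec_mulVec]
  calc ‖P.mulVec (Q.mulVec x)‖ ≤ mnorm P * ‖Q.mulVec x‖ := mulVec_le_mnorm P _
    _ ≤ mnorm P * (mnorm Q * ‖x‖) :=
      mul_le_mul_of_nonneg_left (mulVec_le_mnorm Q x) (mnorm_nonneg P)
    _ = mnorm P * mnorm Q * ‖x‖ := by ring

lemma le_mnorm_of (P : Matrix (Fin d) (Fin d) ℝ) {x : Fin d → ℝ} (hx : ‖x‖ = 1) :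
    ‖P.mulVec x‖ ≤ mnorm P := by
  simpa [hx] using mulVec_le_mnorm P x

-- prodsOf lemmas
lemma one_mem_prodsOf (𝒜 : Set (Matrix (Fin d) (Fin d) ℝ)) :
    (1 : Matrix (Fin d) (Fin d) ℝ) ∈ prodsOf 𝒜 0 :=
  ⟨[], by simp, rfl, List.prod_nil⟩

lemma prodsOf_zero (𝒜 : Set (Matrix (Fin d) (Fin d) ℝ)) :
    prodsOf 𝒜 0 = {1} := by
  ext P
  constructor
  · rintro ⟨l, -, hl, rfl⟩
    simp [List.length_eq_zero_iff.mp hl]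
  · rintro rfl; exact one_mem_prodsOf 𝒜

lemma mem_prodsOf_one {𝒜 : Set (Matrix (Fin d) (Fin d) ℝ)} {A : Matrix (Fin d) (Fin d) ℝ}
    (hA : A ∈ 𝒜) : A ∈ prodsOf 𝒜 1 :=
  ⟨[A], by simpa using hA, rfl, by simp⟩

lemma mul_mem_prodsOf {𝒜 : Set (Matrix (Fin d) (Fin d) ℝ)} {a b : ℕ}
    {P Q : Matrix (Fin d) (Fin d) ℝ} (hP : P ∈ prodsOf 𝒜 a) (hQ : Q ∈ prodsOf 𝒜 b) :
    P * Q ∈ prodsOf 𝒜 (a + b) := by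
  obtain ⟨l, hl, hlen, rfl⟩ := hP
  obtain ⟨m, hm, hmlen, rfl⟩ := hQ
  exact ⟨l ++ m, fun x hx => ((List.mem_append.mp hx).elim (hl x) (hm x)),
    by simp [hlen, hmlen], by simp⟩

lemma prodsOf_add_split {𝒜 : Set (Matrix (Fin d) (Fin d) ℝ)} {a b : ℕ}
    {P : Matrix (Fin d) (Fin d) ℝ} (hP : P ∈ prodsOf 𝒜 (a + b)) :
    ∃ Q R, Q ∈ prodsOf 𝒜 a ∧ R ∈ prodsOf 𝒜 b ∧ P = Q * R := by
  obtain ⟨l, hl, hlen, rfl⟩ := hP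
  refine ⟨(l.take a).prod, (l.drop a).prod,
    ⟨l.take a, fun x hx => hl x (List.mem_of_mem_take hx), by simp [hlen], rfl⟩,
    ⟨l.drop a, fun x hx => hl x (List.mem_of_mem_drop hx), by simp [hlen], rfl⟩, ?_⟩
  rw [← List.prod_append, List.take_append_drop]

lemma prodsOf_succ_split {𝒜 : Set (Matrix (Fin d) (Fin d) ℝ)} {k : ℕ}
    {P : Matrix (Fin d) (Fin d) ℝ} (hP : P ∈ prodsOf 𝒜 (k + 1)) :
    ∃ Q A, Q ∈ prodsOf 𝒜 k ∧ A ∈ 𝒜 ∧ P = Q * A := by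
  obtain ⟨Q, R, hQ, hR, rfl⟩ := prodsOf_add_split hP
  obtain ⟨m, hm, hmlen, rfl⟩ := hR
  obtain ⟨A, rfl⟩ := List.length_eq_one_iff.mp hmlen
  exact ⟨Q, A, hQ, hm A (by simp), by simp⟩

lemma prodsOf_finite {𝒜 : Set (Matrix (Fin d) (Fin d) ℝ)} (h : 𝒜.Finite) (k : ℕ) :
    (prodsOf 𝒜 k).Finite := by
  induction k with
  | zero => rw [prodsOf_zero]; exact Set.finite_singleton 1
  | succ k ih =>
    have : prodsOf 𝒜 (k + 1) ⊆ Set.image2 (· * ·) (prodsOf 𝒜 k) 𝒜 := by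
      intro P hP
      obtain ⟨Q, A, hQ, hA, rfl⟩ := prodsOf_succ_split hP
      exact Set.mem_image2_of_mem hQ hA
    exact (ih.image2 _ h).subset this

lemma prodsOf_nonempty {𝒜 : Set (Matrix (Fin d) (Fin d) ℝ)} (h : 𝒜.Nonempty) (k : ℕ) :
    (prodsOf 𝒜 k).Nonempty := by
  induction k with
  | zero => exact ⟨1, one_mem_prodsOf 𝒜⟩
  | succ k ih =>
    obtain ⟨P, hP⟩ := ih
    obtain ⟨A, hA⟩ := h
    exact ⟨P * A, by simpa using mul_mem_prodsOf hP (mem_prodsOf_one hA)⟩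

-- sup over products
section sups

variable (𝒜 : Finset (Matrix (Fin d) (Fin d) ℝ))

noncomputable def gsup (k : ℕ) : ℝ := sSup (mnorm '' prodsOf (𝒜 : Set (Matrix (Fin d) (Fin d) ℝ)) k)

noncomputable def fsup (k : ℕ) (x : Fin d → ℝ) : ℝ :=
  sSup ((fun P => ‖P.mulVec x‖) '' prodsOf (𝒜 : Set (Matrix (Fin d) (Fin d) ℝ)) k)

variable {𝒜}

lemma gsup_bdd (k : ℕ) : BddAbove (mnorm '' prodsOf (𝒜 : Set (Matrix (Fin d) (Fin d) ℝ)) k) :=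
  ((prodsOf_finite 𝒜.finite_toSet k).image _).bddAbove

lemma fsup_bdd (k : ℕ) (x : Fin d → ℝ) :
    BddAbove ((fun P => ‖P.mulVec x‖) '' prodsOf (𝒜 : Set (Matrix (Fin d) (Fin d) ℝ)) k) :=
  ((prodsOf_finite 𝒜.finite_toSet k).image _).bddAbove

lemma le_gsup {k : ℕ} {P : Matrix (Fin d) (Fin d) ℝ} (hP : P ∈ prodsOf (𝒜 : Set (Matrix (Fin d) (Fin d) ℝ)) k) :
    mnorm P ≤ gsup 𝒜 k :=
  le_csSup (gsup_bdd k) ⟨P, hP, rfl⟩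

lemma gsup_le (hne : 𝒜.Nonempty) {k : ℕ} {c : ℝ}
    (h : ∀ P ∈ prodsOf (𝒜 : Set (Matrix (Fin d) (Fin d) ℝ)) k, mnorm P ≤ c) : gsup 𝒜 k ≤ c := by
  refine csSup_le ((prodsOf_nonempty (by exact_mod_cast hne.to_set) k).image _) ?_
  rintro - ⟨P, hP, rfl⟩
  exact h P hP

lemma gsup_exists_mem (hne : 𝒜.Nonempty) (k : ℕ) :
    ∃ P ∈ prodsOf (𝒜 : Set (Matrix (Fin d) (Fin d) ℝ)) k, mnorm P = gsup 𝒜 k := by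
  have hfin : (mnorm '' prodsOf (𝒜 : Set (Matrix (Fin d) (Fin d) ℝ)) k).Finite :=
    (prodsOf_finite 𝒜.finite_toSet k).image _
  have hnem : (mnorm '' prodsOf (𝒜 : Set (Matrix (Fin d) (Fin d) ℝ)) k).Nonempty :=
    (prodsOf_nonempty (by exact_mod_cast hne.to_set) k).image _
  obtain ⟨P, hP, hPe⟩ := hnem.csSup_mem hfin
  exact ⟨P, hP, hPe⟩

lemma gsup_nonneg (hne : 𝒜.Nonempty) (k : ℕ) : 0 ≤ gsup 𝒜 k := by
  obtain ⟨P, hP⟩ := prodsOf_nonempty (by exact_mod_cast hne.to_set) k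
  exact (mnorm_nonneg P).trans (le_gsup hP)

lemma le_fsup {k : ℕ} {P : Matrix (Fin d) (Fin d) ℝ} (hP : P ∈ prodsOf (𝒜 : Set (Matrix (Fin d) (Fin d) ℝ)) k)
    (x : Fin d → ℝ) : ‖P.mulVec x‖ ≤ fsup 𝒜 k x :=
  le_csSup (fsup_bdd k x) ⟨P, hP, rfl⟩

lemma fsup_le (hne : 𝒜.Nonempty) {k : ℕ} {x : Fin d → ℝ} {c : ℝ}
    (h : ∀ P ∈ prodsOf (𝒜 : Set (Matrix (Fin d) (Fin d) ℝ)) k, ‖P.mulVec x‖ ≤ c) : fsup 𝒜 k x ≤ c := by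
  refine csSup_le ((prodsOf_nonempty (by exact_mod_cast hne.to_set) k).image _) ?_
  rintro - ⟨P, hP, rfl⟩
  exact h P hP

lemma fsup_exists_mem (hne : 𝒜.Nonempty) (k : ℕ) (x : Fin d → ℝ) :
    ∃ P ∈ prodsOf (𝒜 : Set (Matrix (Fin d) (Fin d) ℝ)) k, ‖P.mulVec x‖ = fsup 𝒜 k x := by
  have hfin : ((fun P => ‖P.mulVec x‖) '' prodsOf (𝒜 : Set (Matrix (Fin d) (Fin d) ℝ)) k).Finite :=
    (prodsOf_finite 𝒜.finite_toSet k).image _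
  have hnem : ((fun P => ‖P.mulVec x‖) '' prodsOf (𝒜 : Set (Matrix (Fin d) (Fin d) ℝ)) k).Nonempty :=
    (prodsOf_nonempty (by exact_mod_cast hne.to_set) k).image _
  obtain ⟨P, hP, hPe⟩ := hnem.csSup_mem hfin
  exact ⟨P, hP, hPe⟩

lemma fsup_nonneg (hne : 𝒜.Nonempty) (k : ℕ) (x : Fin d → ℝ) : 0 ≤ fsup 𝒜 k x := by
  obtain ⟨P, hP⟩ := prodsOf_nonempty (by exact_mod_cast hne.to_set) k
  exact (norm_nonneg _).trans (le_fsup hP x)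

lemma fsup_le_gsup_mul (hne : 𝒜.Nonempty) (k : ℕ) (x : Fin d → ℝ) :
    fsup 𝒜 k x ≤ gsup 𝒜 k * ‖x‖ := by
  refine fsup_le hne fun P hP => ?_
  exact (mulVec_le_mnorm P x).trans (mul_le_mul_of_nonneg_right (le_gsup hP) (norm_nonneg x))

lemma gsup_add_le (hne : 𝒜.Nonempty) (a b : ℕ) :
    gsup 𝒜 (a + b) ≤ gsup 𝒜 a * gsup 𝒜 b := by
  refine gsup_le hne fun P hP => ?_
  obtain ⟨Q, R, hQ, hR, rfl⟩ := prodsOf_add_split hP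
  exact (mnorm_mul_le Q R).trans
    (mul_le_mul (le_gsup hQ) (le_gsup hR) (mnorm_nonneg R) (gsup_nonneg hne a))

lemma gsup_mul_le_pow (hne : 𝒜.Nonempty) (k : ℕ) (n : ℕ) :
    gsup 𝒜 (n * k) ≤ gsup 𝒜 k ^ n := by
  induction n with
  | zero =>
    rw [Nat.zero_mul, pow_zero]
    refine gsup_le hne fun P hP => ?_
    rw [prodsOf_zero] at hP
    rcases hP with rfl
    exact mnorm_le_bound zero_le_one fun x => by simp [Matrix.one_mulVec]
  | succ n ih =>
    have : (n + 1) * k = n * k + k := by ring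
    rw [this, pow_succ]
    exact (gsup_add_le hne _ _).trans
      (mul_le_mul_of_nonneg_right ih (gsup_nonneg hne k))

lemma sSup_rpow_eq (hne : 𝒜.Nonempty) (k : ℕ) :
    sSup ((fun P => mnorm P ^ ((1 : ℝ) / k)) '' prodsOf (𝒜 : Set (Matrix (Fin d) (Fin d) ℝ)) k)
      = gsup 𝒜 k ^ ((1 : ℝ) / k) := by
  obtain ⟨P₀, hP₀, hP₀e⟩ := gsup_exists_mem hne k
  refine IsGreatest.csSup_eq ⟨⟨P₀, hP₀, by simp only [hP₀e]⟩, ?_⟩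
  rintro - ⟨P, hP, rfl⟩
  exact Real.rpow_le_rpow (mnorm_nonneg P) (le_gsup hP) (by positivity)

end sups

-- consequences of the joint spectral radius hypothesis
section jsr

variable {𝒜 : Finset (Matrix (Fin d) (Fin d) ℝ)}

lemma one_le_gsup (hne : 𝒜.Nonempty)
    (hρ' : Tendsto (fun k : ℕ => gsup 𝒜 k ^ ((1 : ℝ) / k)) atTop (nhds 1))
    {k0 : ℕ} (hk0 : 1 ≤ k0) : 1 ≤ gsup 𝒜 k0 := by
  by_contra hlt
  push_neg at hlt
  set r := gsup 𝒜 k0 with hr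
  have hr0 : 0 ≤ r := gsup_nonneg hne k0
  have hr' : r ^ ((1 : ℝ) / k0) < 1 :=
    Real.rpow_lt_one hr0 hlt (by positivity)
  have hev : ∀ᶠ k in atTop, r ^ ((1 : ℝ) / k0) < gsup 𝒜 k ^ ((1 : ℝ) / k) :=
    hρ'.eventually (eventually_gt_nhds hr')
  obtain ⟨M, hM⟩ := eventually_atTop.mp hev
  set n := M + 1
  set k := n * k0 with hk
  have hkM : M ≤ k := by
    calc M ≤ n := Nat.le_succ M
    _ = n * 1 := (mul_one n).symm
    _ ≤ n * k0 := Nat.mul_le_mul_left n hk0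
  have h1 : gsup 𝒜 k ≤ r ^ n := gsup_mul_le_pow hne k0 n
  have h2 : gsup 𝒜 k ^ ((1 : ℝ) / k) ≤ (r ^ n) ^ ((1 : ℝ) / k) :=
    Real.rpow_le_rpow (gsup_nonneg hne k) h1 (by positivity)
  have h3 : ((r ^ n : ℝ)) ^ ((1 : ℝ) / k) = r ^ ((1 : ℝ) / k0) := by
    rw [← Real.rpow_natCast r n, ← Real.rpow_mul hr0]
    congr 1
    have hn : (n : ℝ) ≠ 0 := by positivity
    have hk0' : (k0 : ℝ) ≠ 0 := by positivity
    rw [hk]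
    push_cast
    field_simp
  have := (hM k hkM).trans_le (h2.trans_eq h3)
  exact lt_irrefl _ this

/-- If every nonzero vector has unbounded trajectory, we contradict JSR = 1. -/
lemma not_all_unbounded (hne : 𝒜.Nonempty) (hd : 0 < d)
    (hρ' : Tendsto (fun k : ℕ => gsup 𝒜 k ^ ((1 : ℝ) / k)) atTop (nhds 1))
    (hunb : ∀ x : Fin d → ℝ, x ≠ 0 → ∀ C : ℝ, ∃ k, ∃ P ∈ prodsOf (𝒜 : Set (Matrix (Fin d) (Fin d) ℝ)) k,
      C < ‖P.mulVec x‖) : False := by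
  classical
  -- open cover of the unit sphere
  set U : ℕ → Set (Fin d → ℝ) := fun k =>
    ⋃ P ∈ prodsOf (𝒜 : Set (Matrix (Fin d) (Fin d) ℝ)) k, {x | 3 < ‖P.mulVec x‖} with hU
  have hUopen : ∀ k, IsOpen (U k) := by
    intro k
    refine isOpen_biUnion fun P _ => ?_
    have hc : Continuous fun x : Fin d → ℝ => ‖P.mulVec x‖ := by
      have : Continuous fun x : Fin d → ℝ => P.mulVec x :=
        (Matrix.mulVecLin P).continuous_of_finiteDimensional
      exact this.norm
    exact isOpen_lt continuous_const hc
  have hcover : Metric.sphere (0 : Fin d → ℝ) 1 ⊆ ⋃ k, U k := by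
    intro x hx
    have hx1 : ‖x‖ = 1 := by simpa using mem_sphere_zero_iff_norm.mp hx
    have hxne : x ≠ 0 := by intro h; rw [h] at hx1; simp at hx1
    obtain ⟨k, P, hP, h3⟩ := hunb x hxne 3
    exact Set.mem_iUnion.mpr ⟨k, Set.mem_biUnion hP h3⟩
  obtain ⟨t, ht⟩ := (isCompact_sphere (0 : Fin d → ℝ) 1).elim_finite_subcover U hUopen hcover
  set K : ℕ := max (t.sup id) 1 with hK
  have hK1 : 1 ≤ K := le_max_right _ 1
  -- growth step
  have step : ∀ x : Fin d → ℝ, x ≠ 0 → ∃ k, ∃ P ∈ prodsOf (𝒜 : Set (Matrix (Fin d) (Fin d) ℝ)) k,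
      1 ≤ k ∧ k ≤ K ∧ 3 * ‖x‖ ≤ ‖P.mulVec x‖ := by
    intro x hx
    have hnx : ‖x‖ ≠ 0 := norm_ne_zero_iff.mpr hx
    have hnxpos : 0 < ‖x‖ := norm_pos_iff.mpr hx
    set u := ‖x‖⁻¹ • x with hu
    have hu1 : ‖u‖ = 1 := by
      rw [hu, norm_smul, norm_inv, norm_norm, inv_mul_cancel₀ hnx]
    have husphere : u ∈ Metric.sphere (0 : Fin d → ℝ) 1 :=
      mem_sphere_zero_iff_norm.mpr hu1
    obtain ⟨k, hkt, hkU⟩ := Set.mem_iUnion₂.mp (ht husphere)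
    obtain ⟨P, hP, h3⟩ := Set.mem_iUnion₂.mp hkU
    have h3' : 3 < ‖P.mulVec u‖ := h3
    have hmv : P.mulVec u = ‖x‖⁻¹ • P.mulVec x := by
      rw [hu, Matrix.mulVec_smul]
    have hnorm : ‖P.mulVec u‖ = ‖x‖⁻¹ * ‖P.mulVec x‖ := by
      rw [hmv, norm_smul, norm_inv, norm_norm]
    have hineq : 3 * ‖x‖ ≤ ‖P.mulVec x‖ := by
      rw [hnorm] at h3'
      nlinarith [h3', hnxpos, mul_inv_cancel₀ hnx]
    have hk1 : 1 ≤ k := by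
      rcases Nat.eq_zero_or_pos k with rfl | h
      · exfalso
        rw [prodsOf_zero] at hP
        rcases hP with rfl
        rw [Matrix.one_mulVec, hu1] at h3'
        norm_num at h3'
      · exact h
    exact ⟨k, P, hP, hk1, le_max_of_le_left (Finset.le_sup (f := id) hkt), hineq⟩
  -- iterate
  set x0 : Fin d → ℝ := Pi.single ⟨0, hd⟩ 1 with hx0
  have hx01 : ‖x0‖ = 1 := by rw [hx0, Pi.norm_single]; simp
  have iter : ∀ n : ℕ, ∃ L, ∃ P ∈ prodsOf (𝒜 : Set (Matrix (Fin d) (Fin d) ℝ)) L,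
      n ≤ L ∧ L ≤ n * K ∧ (3 : ℝ) ^ n ≤ ‖P.mulVec x0‖ := by
    intro n
    induction n with
    | zero =>
      exact ⟨0, 1, one_mem_prodsOf _, le_refl 0, by simp, by
        rw [Matrix.one_mulVec, hx01]; norm_num⟩
    | succ n ih =>
      obtain ⟨L, P, hP, hnL, hLK, h3n⟩ := ih
      have hxne : P.mulVec x0 ≠ 0 := by
        intro h
        rw [h, norm_zero] at h3n
        nlinarith [pow_pos (by norm_num : (0:ℝ) < 3) n]
      obtain ⟨k, Q, hQ, hk1, hkK, hgrow⟩ := step (P.mulVec x0) hxne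
      refine ⟨k + L, Q * P, mul_mem_prodsOf hQ hP, by omega, ?_, ?_⟩
      · calc k + L ≤ K + n * K := add_le_add hkK hLK
          _ = (n + 1) * K := by ring
      rw [← Matrix.mulVec_mulVec] at *
      calc (3:ℝ) ^ (n+1) = 3 * 3 ^ n := by ring
        _ ≤ 3 * ‖P.mulVec x0‖ := by nlinarith
        _ ≤ ‖Q.mulVec (P.mulVec x0)‖ := hgrow
  -- contradiction with hρ'
  set c : ℝ := (3 : ℝ) ^ ((1 : ℝ) / K) with hc
  have hc1 : 1 < c := by
    rw [hc]
    rw [Real.one_lt_rpow_iff_of_pos (by norm_num)]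
    left
    constructor
    · norm_num
    · positivity
  have hev : ∀ᶠ k in atTop, gsup 𝒜 k ^ ((1 : ℝ) / k) < c :=
    hρ'.eventually (eventually_lt_nhds hc1)
  obtain ⟨M, hM⟩ := eventually_atTop.mp hev
  set n := max M 1 with hn
  obtain ⟨L, P, hP, hnL, hLK, h3n⟩ := iter n
  have hL1 : 1 ≤ L := le_trans (le_max_right M 1) hnL
  have hLM : M ≤ L := le_trans (le_max_left M 1) hnL
  have hgsup : (3 : ℝ) ^ n ≤ gsup 𝒜 L := by
    have h1 : ‖P.mulVec x0‖ ≤ mnorm P := by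
      have := mulVec_le_mnorm P x0
      rwa [hx01, mul_one] at this
    exact h3n.trans (h1.trans (le_gsup hP))
  have hLpos : (0:ℝ) < L := by exact_mod_cast hL1
  have h2 : c ≤ gsup 𝒜 L ^ ((1:ℝ)/L) := by
    have e1 : ((3:ℝ) ^ n) ^ ((1:ℝ)/L) ≤ gsup 𝒜 L ^ ((1:ℝ)/L) :=
      Real.rpow_le_rpow (by positivity) hgsup (by positivity)
    have e2 : ((3:ℝ) ^ n) ^ ((1:ℝ)/L) = (3:ℝ) ^ ((n:ℝ)/L) := by
      rw [← Real.rpow_natCast (3:ℝ) n, ← Real.rpow_mul (by norm_num)]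
      congr 1
      field_simp
    have e3 : (1:ℝ)/K ≤ (n:ℝ)/L := by
      rw [div_le_div_iff₀ (by positivity) hLpos]
      calc (1:ℝ) * L = L := one_mul _
        _ ≤ (n * K : ℕ) := by exact_mod_cast hLK
        _ = (n:ℝ) * K := by push_cast; ring
    have e4 : c ≤ (3:ℝ) ^ ((n:ℝ)/L) :=
      Real.rpow_le_rpow_of_exponent_le (by norm_num) e3
    rw [e2] at e1
    exact e4.trans e1
  exact absurd (hM L hLM) (not_lt.mpr h2)

end jsr

-- uniform boundedness of products
section bounded

variable {𝒜 : Finset (Matrix (Fin d) (Fin d) ℝ)}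

lemma gsup_bounded (hne : 𝒜.Nonempty)
    (hirr : ∀ S : Submodule ℝ (Fin d → ℝ),
      (∀ A ∈ 𝒜, ∀ x ∈ S, A.mulVec x ∈ S) → S = ⊥ ∨ S = ⊤)
    (hρ' : Tendsto (fun k : ℕ => gsup 𝒜 k ^ ((1 : ℝ) / k)) atTop (nhds 1)) :
    ∃ B : ℝ, 0 ≤ B ∧ ∀ k, gsup 𝒜 k ≤ B := by
  classical
  rcases Nat.eq_zero_or_pos d with rfl | hd
  · refine ⟨1, zero_le_one, fun k => gsup_le hne fun P _ => ?_⟩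
    refine mnorm_le_bound zero_le_one fun x => ?_
    have : P.mulVec x = 0 := by
      funext i; exact absurd i.2 (by omega)
    rw [this, norm_zero]
    positivity
  · -- the submodule of vectors with bounded trajectories
    set V : Submodule ℝ (Fin d → ℝ) :=
      { carrier := {x | ∃ C, ∀ k, ∀ P ∈ prodsOf (𝒜 : Set (Matrix (Fin d) (Fin d) ℝ)) k,
          ‖P.mulVec x‖ ≤ C}
        add_mem' := by
          rintro x y ⟨C, hC⟩ ⟨D, hD⟩
          refine ⟨C + D, fun k P hP => ?_⟩
          rw [Matrix.mulVec_add]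
          exact (norm_add_le _ _).trans (add_le_add (hC k P hP) (hD k P hP))
        zero_mem' := ⟨0, fun k P hP => by rw [Matrix.mulVec_zero, norm_zero]⟩
        smul_mem' := by
          rintro c x ⟨C, hC⟩
          refine ⟨|c| * C, fun k P hP => ?_⟩
          rw [Matrix.mulVec_smul, norm_smul, Real.norm_eq_abs]
          have hC0 : 0 ≤ C := (norm_nonneg _).trans (hC 0 1 (one_mem_prodsOf _))
          exact mul_le_mul_of_nonneg_left (hC k P hP) (abs_nonneg c) } with hV
    have hVinv : ∀ A ∈ 𝒜, ∀ x ∈ V, A.mulVec x ∈ V := by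
      rintro A hA x ⟨C, hC⟩
      have hC0 : 0 ≤ C := (norm_nonneg _).trans (hC 0 1 (one_mem_prodsOf _))
      refine ⟨C, fun k P hP => ?_⟩
      rw [Matrix.mulVec_mulVec]
      exact hC (k + 1) (P * A) (mul_mem_prodsOf hP (mem_prodsOf_one (by exact_mod_cast hA)))
    rcases hirr V hVinv with hbot | htop
    · exfalso
      refine not_all_unbounded hne hd hρ' fun x hx C => ?_
      have hxV : x ∉ V := by
        rw [hbot]
        simpa using hx
      rw [hV] at hxV
      simp only [Submodule.mem_mk, AddSubmonoid.mem_mk, AddSubsemigroup.mem_mk,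
        Set.mem_setOf_eq] at hxV
      push_neg at hxV
      obtain ⟨k, P, hP, hPC⟩ := hxV C
      exact ⟨k, P, hP, hPC⟩
    · -- every basis vector has a bounded trajectory
      have hbdd : ∀ j : Fin d, ∃ C, 0 ≤ C ∧ ∀ k, ∀ P ∈ prodsOf (𝒜 : Set (Matrix (Fin d) (Fin d) ℝ)) k,
          ‖P.mulVec (Pi.single j 1 : Fin d → ℝ)‖ ≤ C := by
        intro j
        have : (Pi.single j 1 : Fin d → ℝ) ∈ V := htop ▸ Submodule.mem_top
        obtain ⟨C, hC⟩ := this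
        exact ⟨C, (norm_nonneg _).trans (hC 0 1 (one_mem_prodsOf _)), hC⟩
      choose C hC0 hC using hbdd
      refine ⟨∑ j, C j, Finset.sum_nonneg fun j _ => hC0 j, fun k => ?_⟩
      refine gsup_le hne fun P hP => ?_
      refine mnorm_le_bound (Finset.sum_nonneg fun j _ => hC0 j) fun x => ?_
      have hx : x = ∑ j, x j • (Pi.single j 1 : Fin d → ℝ) := by
        conv_lhs => rw [← Finset.univ_sum_single x]
        refine Finset.sum_congr rfl fun j _ => ?_
        rw [← Pi.single_smul, smul_eq_mul, mul_one]
      calc ‖P.mulVec x‖ = ‖∑ j, x j • P.mulVec (Pi.single j 1 : Fin d → ℝ)‖ := by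
            conv_lhs => rw [hx]
            congr 1
            rw [← Matrix.mulVecLin_apply, map_sum]
            simp [Matrix.mulVecLin_apply, Matrix.mulVec_smul]
        _ ≤ ∑ j, ‖x j • P.mulVec (Pi.single j 1 : Fin d → ℝ)‖ := norm_sum_le _ _
        _ ≤ ∑ j, ‖x‖ * C j := by
            refine Finset.sum_le_sum fun j _ => ?_
            rw [norm_smul]
            exact mul_le_mul (norm_le_pi_norm x j) (hC j k P hP) (norm_nonneg _) (norm_nonneg _)
        _ = (∑ j, C j) * ‖x‖ := by rw [Finset.sum_mul]; exact Finset.sum_congr rfl fun j _ => mul_comm _ _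

end bounded

-- limsup helpers for nonnegative bounded real sequences
section limsupHelpers

variable {u v : ℕ → ℝ} {c C : ℝ}

lemma bddAboveSeq (h : ∀ k, u k ≤ C) : IsBoundedUnder (· ≤ ·) atTop u :=
  isBoundedUnder_of ⟨C, fun k => h k⟩

lemma cobddSeq (h : ∀ k, 0 ≤ u k) : IsCoboundedUnder (· ≤ ·) atTop u :=
  (isBoundedUnder_of ⟨0, fun k => h k⟩ : IsBoundedUnder (· ≥ ·) atTop u).isCoboundedUnder_le

lemma limsup_le_const (h0 : ∀ k, 0 ≤ u k) (h : ∀ k, u k ≤ C) : limsup u atTop ≤ C :=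
  limsup_le_of_le (cobddSeq h0) (Eventually.of_forall h)

lemma const_le_limsup (h0 : ∀ k, 0 ≤ u k) (hC : ∀ k, C ≤ u k) (hB : ∀ k, u k ≤ c) :
    C ≤ limsup u atTop :=
  le_limsup_of_frequently_le (Frequently.of_forall hC) (bddAboveSeq hB)

lemma limsup_nonneg (h0 : ∀ k, 0 ≤ u k) (hB : ∀ k, u k ≤ c) : 0 ≤ limsup u atTop :=
  const_le_limsup h0 h0 hB

lemma limsup_mono_seq (h : ∀ k, u k ≤ v k) (h0 : ∀ k, 0 ≤ u k) (hB : ∀ k, v k ≤ C) :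
    limsup u atTop ≤ limsup v atTop :=
  limsup_le_limsup (Eventually.of_forall h) (cobddSeq h0) (bddAboveSeq hB)

lemma limsup_add_seq (h0u : ∀ k, 0 ≤ u k) (hBu : ∀ k, u k ≤ c)
    (h0v : ∀ k, 0 ≤ v k) (hBv : ∀ k, v k ≤ C) :
    limsup (fun k => u k + v k) atTop ≤ limsup u atTop + limsup v atTop :=
  limsup_add_le (isBoundedUnder_of ⟨0, fun k => h0u k⟩) (bddAboveSeq hBu)
    (cobddSeq h0v) (bddAboveSeq hBv)

lemma limsup_const_mul_seq (hc : 0 ≤ c) (h0 : ∀ k, 0 ≤ u k) (hB : ∀ k, u k ≤ C) :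
    limsup (fun k => c * u k) atTop = c * limsup u atTop := by
  rcases eq_or_lt_of_le hc with rfl | hc
  · simp only [zero_mul]
    exact limsup_const 0
  · exact ((OrderIso.mulLeft₀ c hc).limsup_apply (bddAboveSeq hB) (cobddSeq h0)
      (bddAboveSeq (fun k => mul_le_mul_of_nonneg_left (hB k) hc.le))
      (cobddSeq (fun k => mul_nonneg hc.le (h0 k)))).symm

end limsupHelpers

-- structural properties of fsup
section fsupProps

variable {𝒜 : Finset (Matrix (Fin d) (Fin d) ℝ)}

lemma fsup_add_vec (hne : 𝒜.Nonempty) (k : ℕ) (x y : Fin d → ℝ) :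
    fsup 𝒜 k (x + y) ≤ fsup 𝒜 k x + fsup 𝒜 k y := by
  refine fsup_le hne fun P hP => ?_
  rw [Matrix.mulVec_add]
  exact (norm_add_le _ _).trans (add_le_add (le_fsup hP x) (le_fsup hP y))

lemma fsup_smul_vec (hne : 𝒜.Nonempty) (k : ℕ) (c : ℝ) (x : Fin d → ℝ) :
    fsup 𝒜 k (c • x) = |c| * fsup 𝒜 k x := by
  refine le_antisymm ?_ ?_
  · refine fsup_le hne fun P hP => ?_
    rw [Matrix.mulVec_smul, norm_smul, Real.norm_eq_abs]
    exact mul_le_mul_of_nonneg_left (le_fsup hP x) (abs_nonneg c)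
  · obtain ⟨P, hP, hPe⟩ := fsup_exists_mem hne k x
    rw [← hPe]
    have : |c| * ‖P.mulVec x‖ = ‖P.mulVec (c • x)‖ := by
      rw [Matrix.mulVec_smul, norm_smul, Real.norm_eq_abs]
    rw [this]
    exact le_fsup hP (c • x)

lemma fsup_mulVec_le_succ (hne : 𝒜.Nonempty) {A : Matrix (Fin d) (Fin d) ℝ} (hA : A ∈ 𝒜)
    (k : ℕ) (x : Fin d → ℝ) : fsup 𝒜 k (A.mulVec x) ≤ fsup 𝒜 (k + 1) x := by
  refine fsup_le hne fun P hP => ?_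
  rw [Matrix.mulVec_mulVec]
  exact le_fsup (mul_mem_prodsOf hP (mem_prodsOf_one (by exact_mod_cast hA))) x

lemma fsup_succ_le (hne : 𝒜.Nonempty) {k : ℕ} {x : Fin d → ℝ} {c : ℝ}
    (h : ∀ A ∈ 𝒜, fsup 𝒜 k (A.mulVec x) ≤ c) : fsup 𝒜 (k + 1) x ≤ c := by
  refine fsup_le hne fun P hP => ?_
  obtain ⟨Q, A, hQ, hA, rfl⟩ := prodsOf_succ_split hP
  rw [← Matrix.mulVec_mulVec]
  exact (le_fsup hQ (A.mulVec x)).trans (h A (by exact_mod_cast hA))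

lemma gsup_le_sum_fsup (hne : 𝒜.Nonempty) (k : ℕ) :
    gsup 𝒜 k ≤ ∑ j, fsup 𝒜 k (Pi.single j 1 : Fin d → ℝ) := by
  classical
  have hf0 : ∀ j : Fin d, 0 ≤ fsup 𝒜 k (Pi.single j 1 : Fin d → ℝ) :=
    fun j => fsup_nonneg hne k _
  refine gsup_le hne fun P hP => ?_
  refine mnorm_le_bound (Finset.sum_nonneg fun j _ => hf0 j) fun x => ?_
  have hx : x = ∑ j, x j • (Pi.single j 1 : Fin d → ℝ) := by
    conv_lhs => rw [← Finset.univ_sum_single x]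
    refine Finset.sum_congr rfl fun j _ => ?_
    rw [← Pi.single_smul, smul_eq_mul, mul_one]
  calc ‖P.mulVec x‖ = ‖∑ j, x j • P.mulVec (Pi.single j 1 : Fin d → ℝ)‖ := by
        conv_lhs => rw [hx]
        congr 1
        rw [← Matrix.mulVecLin_apply, map_sum]
        simp [Matrix.mulVecLin_apply, Matrix.mulVec_smul]
    _ ≤ ∑ j, ‖x j • P.mulVec (Pi.single j 1 : Fin d → ℝ)‖ := norm_sum_le _ _
    _ ≤ ∑ j, ‖x‖ * fsup 𝒜 k (Pi.single j 1 : Fin d → ℝ) := by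
        refine Finset.sum_le_sum fun j _ => ?_
        rw [norm_smul]
        exact mul_le_mul (norm_le_pi_norm x j) (le_fsup hP _) (norm_nonneg _) (norm_nonneg _)
    _ = (∑ j, fsup 𝒜 k (Pi.single j 1 : Fin d → ℝ)) * ‖x‖ := by
        rw [Finset.sum_mul]; exact Finset.sum_congr rfl fun j _ => mul_comm _ _

end fsupProps


/-- **Classical Barabanov theorem.** A finite irreducible family `𝒜` of `d × d` real matrices
(no common nontrivial invariant subspace) with joint spectral radius `1` possesses a norm `N`
on `ℝ^d` such that `max_{A ∈ 𝒜} N (A x) = N x` for every `x`. -/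
theorem barabanov_classical {d : ℕ} (𝒜 : Finset (Matrix (Fin d) (Fin d) ℝ))
    (hne : 𝒜.Nonempty)
    (hirr : ∀ S : Submodule ℝ (Fin d → ℝ),
      (∀ A ∈ 𝒜, ∀ x ∈ S, A.mulVec x ∈ S) → S = ⊥ ∨ S = ⊤)
    (hρ : Tendsto
      (fun k : ℕ => sSup ((fun P => mnorm P ^ ((1 : ℝ) / k)) '' prodsOf (d := d) ↑𝒜 k))
      atTop (nhds 1)) :
    ∃ N : Seminorm ℝ (Fin d → ℝ), (∀ x, x ≠ 0 → 0 < N x) ∧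
      ∀ x : Fin d → ℝ, IsGreatest ((fun A : Matrix (Fin d) (Fin d) ℝ => N (A.mulVec x)) '' (𝒜 : Set _)) (N x) := by
  classical
  have hρ' : Tendsto (fun k : ℕ => gsup 𝒜 k ^ ((1 : ℝ) / k)) atTop (nhds 1) :=
    hρ.congr fun k => sSup_rpow_eq hne k
  obtain ⟨B, hB0, hB⟩ := gsup_bounded hne hirr hρ'
  set F : (Fin d → ℝ) → ℕ → ℝ := fun x k => fsup 𝒜 k x with hF
  have hF0 : ∀ x, ∀ k, 0 ≤ F x k := fun x k => fsup_nonneg hne k x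
  have hFB : ∀ x, ∀ k, F x k ≤ B * ‖x‖ := fun x k =>
    (fsup_le_gsup_mul hne k x).trans (mul_le_mul_of_nonneg_right (hB k) (norm_nonneg x))
  set Nf : (Fin d → ℝ) → ℝ := fun x => limsup (F x) atTop with hNf
  have hNf0 : ∀ x, 0 ≤ Nf x := fun x => limsup_nonneg (hF0 x) (hFB x)
  have hNadd : ∀ x y, Nf (x + y) ≤ Nf x + Nf y := by
    intro x y
    refine le_trans (limsup_mono_seq (fun k => fsup_add_vec hne k x y) (hF0 _)
      (fun k => add_le_add (hFB x k) (hFB y k))) ?_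
    exact limsup_add_seq (hF0 x) (hFB x) (hF0 y) (hFB y)
  have hNsmul : ∀ (c : ℝ) (x : Fin d → ℝ), Nf (c • x) = |c| * Nf x := by
    intro c x
    have he : F (c • x) = fun k => |c| * F x k := funext fun k => fsup_smul_vec hne k c x
    show limsup (F (c • x)) atTop = |c| * limsup (F x) atTop
    rw [he, limsup_const_mul_seq (abs_nonneg c) (hF0 x) (hFB x)]
  set N : Seminorm ℝ (Fin d → ℝ) :=
    Seminorm.of Nf hNadd (fun a x => by rw [hNsmul, Real.norm_eq_abs]) with hNdef
  have hNcoe : ∀ x, N x = Nf x := fun x => rfl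
  have hstep1 : ∀ A ∈ 𝒜, ∀ x, Nf (A.mulVec x) ≤ Nf x := by
    intro A hA x
    have h1 : limsup (F (A.mulVec x)) atTop ≤ limsup (fun k => F x (k + 1)) atTop :=
      limsup_mono_seq (fun k => fsup_mulVec_le_succ hne hA k x) (hF0 _)
        (fun k => hFB x (k + 1))
    exact h1.trans_eq (limsup_nat_add (F x) 1)
  have hmax : ∀ x, ∃ A ∈ 𝒜, (∀ A' ∈ 𝒜, Nf (A'.mulVec x) ≤ Nf (A.mulVec x)) ∧
      Nf (A.mulVec x) = Nf x := by
    intro x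
    obtain ⟨A, hA, hAmax⟩ := Finset.exists_max_image 𝒜 (fun A => Nf (A.mulVec x)) hne
    refine ⟨A, hA, hAmax, le_antisymm (hstep1 A hA x) ?_⟩
    refine le_of_forall_pos_le_add fun ε hε => ?_
    have hev : ∀ᶠ k in atTop, ∀ A' ∈ 𝒜, F (A'.mulVec x) k ≤ Nf (A.mulVec x) + ε := by
      rw [eventually_all_finset]
      intro A' hA'
      have hlt : limsup (F (A'.mulVec x)) atTop < Nf (A.mulVec x) + ε :=
        lt_of_le_of_lt (hAmax A' hA') (lt_add_of_pos_right _ hε)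
      exact (eventually_lt_of_limsup_lt hlt (bddAboveSeq (hFB _))).mono fun k hk => hk.le
    have hev2 : ∀ᶠ k in atTop, F x (k + 1) ≤ Nf (A.mulVec x) + ε :=
      hev.mono fun k hk => fsup_succ_le hne fun A' hA' => hk A' hA'
    have h3 : limsup (fun k => F x (k + 1)) atTop ≤ Nf (A.mulVec x) + ε :=
      limsup_le_of_le (cobddSeq fun k => hF0 x (k + 1)) hev2
    calc Nf x = limsup (fun k => F x (k + 1)) atTop := (limsup_nat_add (F x) 1).symm
      _ ≤ Nf (A.mulVec x) + ε := h3
  -- the kernel of Nf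
  set S : Submodule ℝ (Fin d → ℝ) :=
    { carrier := {x | Nf x = 0}
      add_mem' := by
        rintro x y hx hy
        refine le_antisymm ?_ (hNf0 _)
        calc Nf (x + y) ≤ Nf x + Nf y := hNadd x y
          _ = 0 := by rw [Set.mem_setOf_eq.mp hx, Set.mem_setOf_eq.mp hy, add_zero]
      zero_mem' := by
        have := hNsmul 0 0
        simpa using this
      smul_mem' := by
        rintro c x hx
        show Nf (c • x) = 0
        rw [hNsmul, Set.mem_setOf_eq.mp hx, mul_zero] } with hS
  have hSmem : ∀ x, x ∈ S ↔ Nf x = 0 := fun x => Iff.rfl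
  have hSinv : ∀ A ∈ 𝒜, ∀ x ∈ S, A.mulVec x ∈ S := by
    intro A hA x hx
    rw [hSmem] at hx ⊢
    exact le_antisymm ((hstep1 A hA x).trans_eq hx) (hNf0 _)
  rcases hirr S hSinv with hbot | htop
  · refine ⟨N, ?_, ?_⟩
    · intro x hx
      have hxS : x ∉ S := by
        rw [hbot]
        simpa using hx
      rw [hSmem] at hxS
      rw [hNcoe]
      exact lt_of_le_of_ne (hNf0 x) (Ne.symm hxS)
    · intro x
      obtain ⟨A, hA, hAmax, hAeq⟩ := hmax x
      constructor
      · exact ⟨A, hA, hAeq⟩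
      · rintro - ⟨A', hA', rfl⟩
        exact hstep1 A' (by exact_mod_cast hA') x
  · exfalso
    set δ : ℝ := 1 / (d + 1) with hδ
    have hδ0 : 0 < δ := by positivity
    have hev : ∀ᶠ k in atTop, ∀ j : Fin d, F (Pi.single j 1 : Fin d → ℝ) k < δ := by
      rw [eventually_all]
      intro j
      have hNj : Nf (Pi.single j 1 : Fin d → ℝ) = 0 := by
        rw [← hSmem]
        rw [htop]
        exact Submodule.mem_top
      have : limsup (F (Pi.single j 1 : Fin d → ℝ)) atTop < δ := by
        rw [show limsup (F (Pi.single j 1 : Fin d → ℝ)) atTop = Nf (Pi.single j 1 : Fin d → ℝ) from rfl, hNj]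
        exact hδ0
      exact eventually_lt_of_limsup_lt this (bddAboveSeq (hFB _))
    have hgs : ∀ᶠ k in atTop, gsup 𝒜 k < 1 := by
      refine hev.mono fun k hk => ?_
      have h1 : gsup 𝒜 k ≤ ∑ j, F (Pi.single j 1 : Fin d → ℝ) k := gsup_le_sum_fsup hne k
      have h2 : ∑ j : Fin d, F (Pi.single j 1 : Fin d → ℝ) k ≤ ∑ _j : Fin d, δ :=
        Finset.sum_le_sum fun j _ => (hk j).le
      have h3 : ∑ _j : Fin d, δ = (d : ℝ) * δ := by
        rw [Finset.sum_const, Finset.card_univ, Fintype.card_fin, nsmul_eq_mul]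
      have h4 : (d : ℝ) * δ < 1 := by
        rw [hδ, mul_one_div]
        rw [div_lt_one (by positivity)]
        linarith [Nat.cast_nonneg (α := ℝ) d]
      calc gsup 𝒜 k ≤ ∑ j, F (Pi.single j 1 : Fin d → ℝ) k := h1
        _ ≤ ∑ _j : Fin d, δ := h2
        _ = (d : ℝ) * δ := h3
        _ < 1 := h4
    obtain ⟨M, hM⟩ := eventually_atTop.mp hgs
    have h1 : 1 ≤ gsup 𝒜 (max M 1) := one_le_gsup hne hρ' (le_max_right M 1)
    exact absurd (hM (max M 1) (le_max_left M 1)) (not_lt.mpr h1)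
end

section
/- Let A be a finite irreducible family of d×d real matrices with joint spectral radius 1, equipped with a Barabanov norm ‖·‖. Then for every ε > 0 there exists a finite product Π of matrices from A with spectralRadius(Π) > 1 − ε. -/
open Filter

/-- The spectral radius of a real matrix: the maximal modulus of its (complex) eigenvalues. -/
noncomputable def specRad {d : ℕ} (P : Matrix (Fin d) (Fin d) ℝ) : ℝ :=
  sSup ((fun z : ℂ => ‖z‖) '' spectrum ℂ (P.map (fun a => (a : ℂ))))

lemma abs_det_le {d : ℕ} (B : Matrix (Fin d) (Fin d) ℝ) (L : ℝ)
    (h : ∀ i j, |B i j| ≤ L) : |B.det| ≤ (d.factorial : ℝ) * L ^ d := by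
  rw [Matrix.det_apply']
  calc |∑ σ : Equiv.Perm (Fin d), Equiv.Perm.sign σ * ∏ i, B (σ i) i|
      ≤ ∑ σ : Equiv.Perm (Fin d), |(Equiv.Perm.sign σ : ℝ) * ∏ i, B (σ i) i| :=
        Finset.abs_sum_le_sum_abs _ _
    _ ≤ ∑ _σ : Equiv.Perm (Fin d), L ^ d := by
        apply Finset.sum_le_sum
        intro σ _
        rw [abs_mul]
        have hs : |(Equiv.Perm.sign σ : ℝ)| = 1 := by
          rcases Int.units_eq_one_or (Equiv.Perm.sign σ) with h1 | h1 <;> simp [h1]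
        rw [hs, one_mul, Finset.abs_prod]
        calc ∏ i, |B (σ i) i| ≤ ∏ _i : Fin d, L :=
              Finset.prod_le_prod (fun i _ => abs_nonneg _) (fun i _ => h _ _)
          _ = L ^ d := by simp
    _ = (d.factorial : ℝ) * L ^ d := by
        rw [Finset.sum_const, Finset.card_univ, Fintype.card_perm, Fintype.card_fin,
          nsmul_eq_mul]

lemma mulVec_norm_le {d : ℕ} (B : Matrix (Fin d) (Fin d) ℝ) (L : ℝ) (hL : 0 ≤ L)
    (h : ∀ i j, |B i j| ≤ L) (v : Fin d → ℝ) : ‖B.mulVec v‖ ≤ (d : ℝ) * L * ‖v‖ := by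
  have hnn : 0 ≤ (d : ℝ) * L * ‖v‖ := by positivity
  rw [pi_norm_le_iff_of_nonneg hnn]
  intro i
  calc ‖B.mulVec v i‖ = |∑ j, B i j * v j| := rfl
    _ ≤ ∑ j, |B i j * v j| := Finset.abs_sum_le_sum_abs _ _
    _ ≤ ∑ _j : Fin d, L * ‖v‖ := by
        apply Finset.sum_le_sum
        intro j _
        rw [abs_mul]
        exact mul_le_mul (h i j) (norm_le_pi_norm v j) (abs_nonneg _) hL
    _ = (d : ℝ) * L * ‖v‖ := by
        rw [Finset.sum_const, Finset.card_univ, Fintype.card_fin, nsmul_eq_mul, mul_assoc]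

lemma eval_charpoly' {d : ℕ} (M : Matrix (Fin d) (Fin d) ℂ) (r : ℂ) :
    M.charpoly.eval r = (Matrix.scalar (Fin d) r - M).det := by
  rw [Matrix.charpoly, eval_det, Matrix.matPolyEquiv_charmatrix]
  simp

lemma mem_spectrum_iff_det {d : ℕ} (M : Matrix (Fin d) (Fin d) ℂ) (μ : ℂ) :
    μ ∈ spectrum ℂ M ↔ M.charpoly.eval μ = 0 := by
  rw [spectrum.mem_iff, Matrix.isUnit_iff_isUnit_det, isUnit_iff_ne_zero, not_ne_iff,
    eval_charpoly']
  congr! 2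

lemma multiset_pow_le_abs_prod (ε : ℝ) (hε : 0 ≤ ε) (s : Multiset ℂ)
    (h : ∀ z ∈ s, ε ≤ ‖z‖) : ε ^ (Multiset.card s) ≤ ‖s.prod‖ := by
  induction s using Multiset.induction_on with
  | empty => simp
  | cons a s ih =>
    rw [Multiset.prod_cons, norm_mul, Multiset.card_cons, pow_succ, mul_comm]
    have h1 : ε ≤ ‖a‖ := h a (Multiset.mem_cons_self a s)
    have h2 : ε ^ Multiset.card s ≤ ‖s.prod‖ :=
      ih fun z hz => h z (Multiset.mem_cons_of_mem hz)
    exact mul_le_mul h1 h2 (pow_nonneg hε _) (norm_nonneg _)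

lemma specRad_det_bound {d : ℕ} (P : Matrix (Fin d) (Fin d) ℝ) (ε : ℝ) (hε : 0 < ε)
    (h : specRad P ≤ 1 - ε) : ε ^ d ≤ |(1 - P).det| := by
  set Pc := P.map (fun a => (a : ℂ)) with hPc
  have hmap : (1 - P).map (fun a => (a : ℂ)) = 1 - Pc := by
    ext i j
    by_cases hij : i = j <;>
      simp [Matrix.map_apply, Matrix.sub_apply, Matrix.one_apply, hij, hPc]
  have hfin : ((fun z : ℂ => ‖z‖) '' spectrum ℂ Pc).Finite := by
    apply Set.Finite.image
    have hsub : spectrum ℂ Pc ⊆ Pc.charpoly.rootSet ℂ := by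
      intro μ hμ
      rw [Polynomial.mem_rootSet]
      refine ⟨Pc.charpoly_monic.ne_zero, ?_⟩
      simpa [Polynomial.aeval_def, Polynomial.eval₂_eq_eval_map, Polynomial.map_id]
        using (mem_spectrum_iff_det Pc μ).mp hμ
    exact (Pc.charpoly.rootSet_finite ℂ).subset hsub
  have hbdd : BddAbove ((fun z : ℂ => ‖z‖) '' spectrum ℂ Pc) := hfin.bddAbove
  have hspec : ∀ μ ∈ spectrum ℂ Pc, ‖μ‖ ≤ 1 - ε := by
    intro μ hμ
    exact le_trans (le_csSup hbdd (Set.mem_image_of_mem _ hμ)) h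
  have hQ : (1 - Pc).det = ((1 - Pc).charpoly).roots.prod :=
    Matrix.det_eq_prod_roots_charpoly (1 - Pc)
  have hcard : Multiset.card ((1 - Pc).charpoly).roots = d := by
    have hs := (Polynomial.splits_iff_card_roots
      (f := (1 - Pc).charpoly)).mp (IsAlgClosed.splits _)
    rwa [Matrix.charpoly_natDegree_eq_dim, Fintype.card_fin] at hs
  have hroot : ∀ z ∈ ((1 - Pc).charpoly).roots, ε ≤ ‖z‖ := by
    intro z hz
    have hz0 : (1 - Pc).charpoly.eval z = 0 :=
      Polynomial.isRoot_of_mem_roots hz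
    have hmem : (1 - z) ∈ spectrum ℂ Pc := by
      rw [mem_spectrum_iff_det, eval_charpoly']
      rw [eval_charpoly'] at hz0
      have heq : Matrix.scalar (Fin d) (1 - z) - Pc = -(Matrix.scalar (Fin d) z - (1 - Pc)) := by
        simp [map_sub, map_one]
        abel
      rw [heq, Matrix.det_neg, hz0, mul_zero]
    have h1 : ‖1 - z‖ ≤ 1 - ε := hspec _ hmem
    have h2 : (1 : ℝ) - ‖1 - z‖ ≤ ‖z‖ := by
      have htri := norm_add_le (1 - z) z
      simp only [sub_add_cancel, norm_one] at htri
      linarith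
    linarith [h2]
  have hge : ε ^ d ≤ ‖(1 - Pc).det‖ := by
    rw [hQ]
    have hx := multiset_pow_le_abs_prod ε hε.le _ hroot
    rwa [hcard] at hx
  have hdet : ‖(1 - Pc).det‖ = |(1 - P).det| := by
    rw [← hmap]
    have hcast : ((1 - P).map fun a => (a : ℂ)).det = (((1 - P).det : ℝ) : ℂ) :=
      (RingHom.map_det Complex.ofRealHom (1 - P)).symm
    rw [hcast, Complex.norm_real, Real.norm_eq_abs]
  rwa [hdet] at hge

lemma seminorm_sum_le {E : Type*} [AddCommGroup E] [Module ℝ E] (N : Seminorm ℝ E)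
    {ι : Type*} (s : Finset ι) (f : ι → E) : N (∑ i ∈ s, f i) ≤ ∑ i ∈ s, N (f i) := by
  classical
  induction s using Finset.induction_on with
  | empty => simp
  | insert _ _ h ih =>
    rw [Finset.sum_insert h, Finset.sum_insert h]
    exact le_trans (map_add_le_add N _ _) (by linarith)
set_option maxHeartbeats 1000000 in
/-- Let `𝒜` be a finite irreducible family of `d × d` real matrices with joint spectral radius
`1`, equipped with a Barabanov norm `N` (so `max_{A ∈ 𝒜} N (A x) = N x` for all `x`). Then for
every `ε > 0` there is a finite product `Π` of matrices from `𝒜` with spectral radius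
`> 1 - ε`. -/
theorem exists_product_specRad_close_to_one {d : ℕ} (𝒜 : Finset (Matrix (Fin d) (Fin d) ℝ))
    (hne : 𝒜.Nonempty)
    (hirr : ∀ S : Submodule ℝ (Fin d → ℝ),
      (∀ A ∈ 𝒜, ∀ x ∈ S, A.mulVec x ∈ S) → S = ⊥ ∨ S = ⊤)
    (hρ : Tendsto
      (fun k : ℕ => sSup ((fun P => mnorm P ^ ((1 : ℝ) / k)) '' prodsOf (d := d) ↑𝒜 k))
      atTop (nhds 1))
    (N : Seminorm ℝ (Fin d → ℝ)) (hpos : ∀ x, x ≠ 0 → 0 < N x)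
    (hbar : ∀ x : Fin d → ℝ,
      IsGreatest ((fun A : Matrix (Fin d) (Fin d) ℝ => N (A.mulVec x)) '' ↑𝒜) (N x)) :
    ∀ ε : ℝ, 0 < ε → ∃ l : List (Matrix (Fin d) (Fin d) ℝ), l ≠ [] ∧ (∀ a ∈ l, a ∈ 𝒜) ∧
      1 - ε < specRad l.prod := by
  intro ε hε
  rcases Nat.eq_zero_or_pos d with hd0 | hd
  · -- degenerate case d = 0 : contradict hρ
    exfalso
    subst hd0
    obtain ⟨A0, hA0⟩ := hne
    have hm0 : ∀ P : Matrix (Fin 0) (Fin 0) ℝ, mnorm P = 0 := by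
      intro P
      have h0 : (LinearMap.toContinuousLinearMap (Matrix.toLin' P)) = 0 := by
        ext v i
        exact i.elim0
      rw [mnorm, h0, norm_zero]
    have hone : ∀ k : ℕ, 1 ≤ k →
        sSup ((fun P => mnorm P ^ ((1 : ℝ) / k)) '' prodsOf (d := 0) ↑𝒜 k) = 0 := by
      intro k hk
      have hPmem : (List.replicate k A0).prod ∈ prodsOf (d := 0) ↑𝒜 k := by
        refine ⟨List.replicate k A0, ?_, List.length_replicate, rfl⟩
        intro a ha
        rw [List.eq_of_mem_replicate ha]
        exact hA0
      have himg : (fun P => mnorm P ^ ((1 : ℝ) / k)) '' prodsOf (d := 0) ↑𝒜 k = {0} := by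
        apply Set.eq_singleton_iff_nonempty_unique_mem.mpr
        constructor
        · exact ⟨_, Set.mem_image_of_mem _ hPmem⟩
        · rintro _ ⟨P, hP, rfl⟩
          have hknz : ((1 : ℝ) / k) ≠ 0 := by
            have : (0 : ℝ) < k := by exact_mod_cast hk
            positivity
          show mnorm P ^ ((1 : ℝ) / k) = 0
          rw [hm0 P]
          exact Real.zero_rpow hknz
      rw [himg, csSup_singleton]
    have h0 : Tendsto
        (fun k : ℕ => sSup ((fun P => mnorm P ^ ((1 : ℝ) / k)) '' prodsOf (d := 0) ↑𝒜 k))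
        atTop (nhds 0) := by
      have hev : (fun k : ℕ => sSup ((fun P => mnorm P ^ ((1 : ℝ) / k)) ''
          prodsOf (d := 0) ↑𝒜 k)) =ᶠ[atTop] (fun _ => (0 : ℝ)) :=
        Filter.eventually_atTop.mpr ⟨1, fun k hk => hone k hk⟩
      exact Tendsto.congr' hev.symm tendsto_const_nhds
    exact one_ne_zero (tendsto_nhds_unique hρ h0)
  -- main case d ≥ 1
  have i0 : Fin d := ⟨0, hd⟩
  set x₀ : Fin d → ℝ := Pi.single i0 1 with hx₀
  have hx₀ne : x₀ ≠ 0 := by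
    intro hc
    have h1 := congrFun hc i0
    simp [hx₀] at h1
  -- upper equivalence constant
  set C : ℝ := (∑ i, N (Pi.single i 1)) + 1 with hC
  have hCpos : 0 < C := by
    have : 0 ≤ ∑ i, N (Pi.single i 1) :=
      Finset.sum_nonneg fun i _ => apply_nonneg N _
    linarith
  have hNle : ∀ x : Fin d → ℝ, N x ≤ C * ‖x‖ := by
    intro x
    have hxe : x = ∑ i, x i • (Pi.single i 1 : Fin d → ℝ) := by
      funext j
      rw [Finset.sum_apply]
      simp [Pi.single_apply, Finset.sum_ite_eq', mul_comm]
    calc N x = N (∑ i, x i • (Pi.single i 1 : Fin d → ℝ)) := by rw [← hxe]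
      _ ≤ ∑ i, N (x i • (Pi.single i 1 : Fin d → ℝ)) := seminorm_sum_le N _ _
      _ = ∑ i, ‖x i‖ * N (Pi.single i 1) := by
          simp only [map_smul_eq_mul]
      _ ≤ ∑ i, ‖x‖ * N (Pi.single i 1) := by
          apply Finset.sum_le_sum
          intro i _
          exact mul_le_mul_of_nonneg_right (norm_le_pi_norm x i) (apply_nonneg N _)
      _ = (∑ i, N (Pi.single i 1)) * ‖x‖ := by rw [← Finset.mul_sum, mul_comm]
      _ ≤ C * ‖x‖ := by
          apply mul_le_mul_of_nonneg_right _ (norm_nonneg x)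
          rw [hC]; linarith
  -- continuity of N
  have hNcont : Continuous fun x : Fin d → ℝ => N x := by
    have hlip : LipschitzWith (Real.toNNReal C) fun x : Fin d → ℝ => N x := by
      apply LipschitzWith.of_dist_le_mul
      intro x y
      rw [Real.dist_eq, dist_eq_norm]
      calc |N x - N y| ≤ N (x - y) := abs_sub_map_le_sub N x y
        _ ≤ C * ‖x - y‖ := hNle _
        _ = (Real.toNNReal C : ℝ) * ‖x - y‖ := by rw [Real.coe_toNNReal C hCpos.le]
    exact hlip.continuous
  -- lower equivalence constant
  have hsne : (Metric.sphere (0 : Fin d → ℝ) 1).Nonempty := by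
    refine ⟨‖x₀‖⁻¹ • x₀, ?_⟩
    have hn0 : ‖x₀‖ ≠ 0 := norm_ne_zero_iff.mpr hx₀ne
    simp [norm_smul, abs_of_nonneg (inv_nonneg.mpr (norm_nonneg x₀)), inv_mul_cancel₀ hn0]
  obtain ⟨z, hzS, hzmin⟩ :=
    (isCompact_sphere (0 : Fin d → ℝ) 1).exists_isMinOn hsne hNcont.continuousOn
  have hzne : z ≠ 0 := by
    intro hc
    rw [mem_sphere_zero_iff_norm] at hzS
    rw [hc, norm_zero] at hzS
    exact one_ne_zero hzS.symm
  set c : ℝ := N z with hc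
  have hcpos : 0 < c := hpos z hzne
  have hcle : ∀ x : Fin d → ℝ, c * ‖x‖ ≤ N x := by
    intro x
    rcases eq_or_ne x 0 with rfl | hx
    · simp
    · have hxn : ‖x‖ ≠ 0 := norm_ne_zero_iff.mpr hx
      have hxpos : 0 < ‖x‖ := (norm_nonneg x).lt_of_ne' hxn
      have hmem : ‖x‖⁻¹ • x ∈ Metric.sphere (0 : Fin d → ℝ) 1 := by
        simp [norm_smul, abs_of_nonneg (inv_nonneg.mpr (norm_nonneg x)),
          inv_mul_cancel₀ hxn]
      have hmin := isMinOn_iff.mp hzmin _ hmem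
      rw [map_smul_eq_mul] at hmin
      have hninv : ‖(‖x‖⁻¹ : ℝ)‖ = ‖x‖⁻¹ := by
        rw [Real.norm_eq_abs, abs_of_nonneg (inv_nonneg.mpr (norm_nonneg x))]
      rw [hninv] at hmin
      calc c * ‖x‖ ≤ (‖x‖⁻¹ * N x) * ‖x‖ :=
            mul_le_mul_of_nonneg_right hmin (norm_nonneg x)
        _ = N x := by field_simp
  -- Barabanov structure
  have hcontr : ∀ A ∈ 𝒜, ∀ y : Fin d → ℝ, N (A.mulVec y) ≤ N y := by
    intro A hA y
    exact (hbar y).2 ⟨A, by simpa using hA, rfl⟩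
  have hch : ∀ y : Fin d → ℝ, ∃ A : Matrix (Fin d) (Fin d) ℝ,
      A ∈ 𝒜 ∧ N (A.mulVec y) = N y := by
    intro y
    obtain ⟨A, hA, hAy⟩ := (hbar y).1
    exact ⟨A, by simpa using hA, hAy⟩
  choose g hg1 hg2 using hch
  obtain ⟨x, hx0, hxs⟩ : ∃ x : ℕ → Fin d → ℝ, x 0 = x₀ ∧
      ∀ k, x (k + 1) = (g (x k)).mulVec (x k) :=
    ⟨fun k => Nat.rec x₀ (fun _ y => (g y).mulVec y) k, rfl, fun _ => rfl⟩
  set ν : ℝ := N x₀ with hν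
  have hνpos : 0 < ν := hpos x₀ hx₀ne
  have hNx : ∀ k, N (x k) = ν := by
    intro k
    induction k with
    | zero => rw [hx0]
    | succ k ih => rw [hxs, hg2, ih]
  -- products
  have hprod : ∀ m n : ℕ, m < n → ∃ l : List (Matrix (Fin d) (Fin d) ℝ),
      l ≠ [] ∧ (∀ a ∈ l, a ∈ 𝒜) ∧ l.prod.mulVec (x m) = x n ∧
      ∀ y, N (l.prod.mulVec y) ≤ N y := by
    intro m n hmn
    induction n, (Nat.succ_le_of_lt hmn) using Nat.le_induction with
    | base =>
      refine ⟨[g (x m)], by simp, ?_, ?_, ?_⟩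
      · intro a ha
        rw [List.mem_singleton] at ha
        subst ha
        exact hg1 _
      · rw [List.prod_singleton]
        exact (hxs m).symm
      · intro y
        rw [List.prod_singleton]
        exact hcontr _ (hg1 _) y
    | succ n hn ih =>
      obtain ⟨l, hlne, hlmem, hlx, hlc⟩ := ih (by omega)
      refine ⟨g (x n) :: l, by simp, ?_, ?_, ?_⟩
      · intro a ha
        rcases List.mem_cons.mp ha with h1 | h1
        · subst h1; exact hg1 _
        · exact hlmem a h1
      · rw [List.prod_cons, ← Matrix.mulVec_mulVec, hlx, ← hxs]
      · intro y
        rw [List.prod_cons, ← Matrix.mulVec_mulVec]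
        exact le_trans (hcontr _ (hg1 _) _) (hlc y)
  -- constants for the final estimate
  set K : ℝ := C / c with hK
  have hKpos : 0 < K := div_pos hCpos hcpos
  set L : ℝ := 1 + K with hL
  have hL1 : (1 : ℝ) ≤ L := by rw [hL]; linarith
  have hLpos : 0 < L := lt_of_lt_of_le one_pos hL1
  set coef : ℝ := (d : ℝ) * ((d.factorial : ℝ) * L ^ d) with hcoef
  have hcoefpos : 0 < coef := by
    rw [hcoef]
    have h1 : (0 : ℝ) < d := by exact_mod_cast hd
    have h2 : (0 : ℝ) < d.factorial := by exact_mod_cast d.factorial_pos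
    positivity
  set δ : ℝ := ε ^ d * ν / (C * (coef + 1)) with hδ
  have hδpos : 0 < δ := by
    rw [hδ]
    positivity
  -- find a near-recurrent pair
  have hbdd : ∀ k, x k ∈ Metric.closedBall (0 : Fin d → ℝ) (ν / c) := by
    intro k
    rw [Metric.mem_closedBall, dist_zero_right]
    have h1 : c * ‖x k‖ ≤ ν := by rw [← hNx k]; exact hcle (x k)
    rw [le_div_iff₀ hcpos, mul_comm]
    exact h1
  obtain ⟨b, _, φ, hφ, hconv⟩ :=
    tendsto_subseq_of_bounded Metric.isBounded_closedBall hbdd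
  obtain ⟨M₀, hM₀⟩ := (Metric.tendsto_atTop.mp hconv) (δ / 2) (by positivity)
  set m : ℕ := φ M₀ with hm
  set n : ℕ := φ (M₀ + 1) with hn
  have hmn : m < n := hφ (lt_add_one M₀)
  have hclose : ‖x n - x m‖ < δ := by
    have h1 : dist (x m) b < δ / 2 := hM₀ M₀ le_rfl
    have h2 : dist (x n) b < δ / 2 := hM₀ (M₀ + 1) (Nat.le_succ _)
    calc ‖x n - x m‖ = dist (x n) (x m) := (dist_eq_norm _ _).symm
      _ ≤ dist (x n) b + dist b (x m) := dist_triangle _ _ _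
      _ = dist (x n) b + dist (x m) b := by rw [dist_comm b]
      _ < δ / 2 + δ / 2 := by linarith
      _ = δ := by ring
  obtain ⟨l, hlne, hlmem, hlx, hlc⟩ := hprod m n hmn
  refine ⟨l, hlne, hlmem, ?_⟩
  by_contra hcon
  push_neg at hcon
  set Pp : Matrix (Fin d) (Fin d) ℝ := l.prod with hPp
  have hdet : ε ^ d ≤ |(1 - Pp).det| := specRad_det_bound Pp ε hε hcon
  -- entry bounds for Pp
  have hPpent : ∀ i j, |Pp i j| ≤ K := by
    intro i j
    have h1 : Pp.mulVec (Pi.single j 1) = Pp.transpose j := Matrix.mulVec_single_one Pp j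
    have hsn : ‖(Pi.single j 1 : Fin d → ℝ)‖ ≤ 1 := by
      rw [pi_norm_le_iff_of_nonneg zero_le_one]
      intro i'
      rw [Pi.single_apply]
      split <;> simp
    have h2 : c * ‖Pp.mulVec (Pi.single j 1)‖ ≤ N (Pp.mulVec (Pi.single j 1)) := hcle _
    have h3 : N (Pp.mulVec (Pi.single j 1)) ≤ N (Pi.single j 1) := hlc _
    have h4 : N (Pi.single j 1 : Fin d → ℝ) ≤ C * ‖(Pi.single j 1 : Fin d → ℝ)‖ := hNle _
    have h5 : ‖Pp.mulVec (Pi.single j 1)‖ ≤ C / c := by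
      rw [div_eq_inv_mul, ← mul_le_mul_iff_right₀ hcpos, ← mul_assoc, mul_inv_cancel₀ hcpos.ne',
        one_mul]
      calc c * ‖Pp.mulVec (Pi.single j 1)‖ ≤ N (Pp.mulVec (Pi.single j 1)) := h2
        _ ≤ N (Pi.single j 1) := h3
        _ ≤ C * ‖(Pi.single j 1 : Fin d → ℝ)‖ := h4
        _ ≤ C := by nlinarith [hsn, hCpos]
    have h6 : |Pp i j| ≤ ‖Pp.mulVec (Pi.single j 1)‖ := by
      have h7 : Pp.mulVec (Pi.single j 1) i = Pp i j := by rw [h1]; rfl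
      calc |Pp i j| = ‖Pp.mulVec (Pi.single j 1) i‖ := by rw [h7]; rfl
        _ ≤ ‖Pp.mulVec (Pi.single j 1)‖ := norm_le_pi_norm _ i
    exact le_trans h6 h5
  -- entry bounds for 1 - Pp
  have hMent : ∀ i j, |(1 - Pp) i j| ≤ L := by
    intro i j
    rw [Matrix.sub_apply]
    calc |(1 : Matrix (Fin d) (Fin d) ℝ) i j - Pp i j|
        ≤ |(1 : Matrix (Fin d) (Fin d) ℝ) i j| + |Pp i j| := abs_sub _ _
      _ ≤ 1 + K := by
          apply add_le_add _ (hPpent i j)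
          rw [Matrix.one_apply]
          split <;> simp
  -- adjugate entry bounds
  have hadj : ∀ i j, |(1 - Pp).adjugate i j| ≤ (d.factorial : ℝ) * L ^ d := by
    intro i j
    rw [Matrix.adjugate_apply]
    apply abs_det_le
    intro i' j'
    rw [Matrix.updateRow_apply]
    split
    · rw [Pi.single_apply]
      split
      · simpa using hL1
      · simpa using hLpos.le
    · exact hMent i' j'
  -- key identity
  have hkey : (1 - Pp).adjugate.mulVec ((1 - Pp).mulVec (x m)) = (1 - Pp).det • x m := by
    rw [Matrix.mulVec_mulVec, Matrix.adjugate_mul, Matrix.smul_mulVec,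
      Matrix.one_mulVec]
  have hmv : (1 - Pp).mulVec (x m) = x m - x n := by
    rw [Matrix.sub_mulVec, Matrix.one_mulVec, hlx]
  -- the contradiction
  have hxmlb : ν / C ≤ ‖x m‖ := by
    rw [div_le_iff₀ hCpos, mul_comm]
    calc ν = N (x m) := (hNx m).symm
      _ ≤ C * ‖x m‖ := hNle _
  have hnorm1 : |(1 - Pp).det| * ‖x m‖ = ‖(1 - Pp).det • x m‖ := by
    rw [norm_smul, Real.norm_eq_abs]
  have hnorm2 : ‖(1 - Pp).det • x m‖ ≤ coef * ‖x m - x n‖ := by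
    rw [← hkey, hmv, hcoef, mul_assoc ((d : ℝ))]
    have := mulVec_norm_le ((1 - Pp).adjugate) ((d.factorial : ℝ) * L ^ d)
      (by positivity) hadj (x m - x n)
    calc ‖(1 - Pp).adjugate.mulVec (x m - x n)‖
        ≤ (d : ℝ) * ((d.factorial : ℝ) * L ^ d) * ‖x m - x n‖ := this
      _ = (d : ℝ) * (((d.factorial : ℝ) * L ^ d) * ‖x m - x n‖) := by ring
  have hfinal : ε ^ d * (ν / C) ≤ coef * δ := by
    calc ε ^ d * (ν / C) ≤ |(1 - Pp).det| * ‖x m‖ :=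
          mul_le_mul hdet hxmlb (by positivity) (abs_nonneg _)
      _ = ‖(1 - Pp).det • x m‖ := hnorm1
      _ ≤ coef * ‖x m - x n‖ := hnorm2
      _ = coef * ‖x n - x m‖ := by rw [norm_sub_rev]
      _ ≤ coef * δ := mul_le_mul_of_nonneg_left hclose.le hcoefpos.le
  have hlt : coef * δ < ε ^ d * (ν / C) := by
    have h1 : coef * δ < (coef + 1) * δ :=
      mul_lt_mul_of_pos_right (lt_add_one coef) hδpos
    have h2 : (coef + 1) * δ = ε ^ d * (ν / C) := by
      rw [hδ, mul_comm C (coef + 1), ← mul_div_assoc,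
        mul_div_mul_left _ _ (ne_of_gt (by positivity : (0:ℝ) < coef + 1)), mul_div_assoc]
    linarith
  linarith
end
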